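/- arXiv:1104.0330 — 2 statements merged into one kernel-verified Lean document; each statement's English description precedes it below -/
import Mathlib

section
/- Velocity gradient of the shock function. Let γ > 1, h(s) := ((γ−1)s/γ)^{1/(γ−1)} for s > 0, c(ρ) := √(γρ^{γ−1}). Fix v^I ∈ ℝ², ρ^I ∈ ℝ, a ∈ ℝ, ψ^I(ξ) := a + v^I·ξ, and define for v ≠ v^I: g(v,ξ) := (h(−ψ^I(ξ) + v·ξ − ½|v|²)·(v−ξ) − ρ^I·(v^I−ξ)) · (v^I−v)/|v^I−v|. Let ξ ∈ ℝ² and v₀ ∈ ℝ² with v₀ ≠ v^I and −ψ^I(ξ) + v₀·ξ − ½|v₀|² > 0. Set ρ := h(−ψ^I(ξ) + v₀·ξ − ½|v₀|²), c := c(ρ), z := v₀ − ξ, n := (v^I − v₀)/|v^I − v₀|, and t := n rotated by 90° counterclockwise. Then v ↦ g(v,ξ) is differentiable at v₀ with gradient ∇_v g(v₀,ξ) = ρ(I − z⊗z/c²)·n − ((ρ·z − ρ^I·(v^I−ξ))·t / |v^I − v₀|)·t. -/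
/-
STATEMENT 9: Velocity gradient of the shock function: with polytropic
h(s) = ((γ−1)s/γ)^(1/(γ−1)), c(ρ) = √(γρ^(γ−1)), affine upstream potential
ψ^I(ξ) = a + v^I·ξ and g(v,ξ) := (h(−ψ^I(ξ)+v·ξ−½|v|²)(v−ξ) − ρ^I(v^I−ξ))·(v^I−v)/|v^I−v|,
the map v ↦ g(v,ξ) is differentiable at v₀ with gradient
ρ(I − z⊗z/c²)n − (((ρz − ρ^I(v^I−ξ))·t)/|v^I−v₀|)·t.
-/

open InnerProductSpace

noncomputable section

abbrev E2 : Type := EuclideanSpace ℝ (Fin 2)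

def vec2 (a b : ℝ) : E2 := (WithLp.equiv 2 (Fin 2 → ℝ)).symm ![a, b]

/-- Rotation by 90° counterclockwise. -/
def rot90 (v : E2) : E2 := vec2 (-(v 1)) (v 0)

/-- h(s) = ((γ−1)s/γ)^(1/(γ−1)), the inverse of π(ρ) = γρ^(γ−1)/(γ−1). -/
def hFun (γ s : ℝ) : ℝ := ((γ - 1) * s / γ) ^ (1 / (γ - 1))

/-- Sound speed c(ρ) = √(γρ^(γ−1)). -/
def soundSpeed (γ ρ : ℝ) : ℝ := Real.sqrt (γ * ρ ^ (γ - 1))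

/-- The shock function g(v,ξ). -/
def gFun (γ : ℝ) (vI : E2) (ρI a : ℝ) (v ξ : E2) : ℝ :=
  ⟪hFun γ (-(a + ⟪vI, ξ⟫_ℝ) + ⟪v, ξ⟫_ℝ - ‖v‖ ^ 2 / 2) • (v - ξ) - ρI • (vI - ξ),
    ‖vI - v‖⁻¹ • (vI - v)⟫_ℝ

set_option maxHeartbeats 1000000

lemma rot90_apply0 (v : E2) : (rot90 v) 0 = -(v 1) := rfl
lemma rot90_apply1 (v : E2) : (rot90 v) 1 = v 0 := rfl

lemma inner_expand (n : E2) (hunit : ‖n‖ = 1) (x w : E2) :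
    ⟪x, w⟫_ℝ = ⟪x, n⟫_ℝ * ⟪n, w⟫_ℝ + ⟪x, rot90 n⟫_ℝ * ⟪rot90 n, w⟫_ℝ := by
  have h1 : n 0 ^ 2 + n 1 ^ 2 = 1 := by
    have := congrArg (· ^ 2) hunit
    simp only [one_pow] at this
    rw [← this, ← real_inner_self_eq_norm_sq]
    simp only [PiLp.inner_apply, Fin.sum_univ_two, RCLike.inner_apply, conj_trivial]
    ring
  simp only [PiLp.inner_apply, Fin.sum_univ_two, RCLike.inner_apply, conj_trivial,
    rot90_apply0, rot90_apply1]
  linear_combination (-(x 0 * w 0) - x 1 * w 1) * h1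


lemma hFun_hasDerivAt (γ s₀ : ℝ) (hγ : 1 < γ) (hs : 0 < s₀) :
    HasDerivAt (hFun γ) (hFun γ s₀ / (soundSpeed γ (hFun γ s₀)) ^ 2) s₀ := by
  have hγ0 : (0:ℝ) < γ := by linarith
  have hγ1 : (0:ℝ) < γ - 1 := by linarith
  set u₀ : ℝ := (γ - 1) * s₀ / γ with hu₀
  have hu : 0 < u₀ := by positivity
  have h1 : HasDerivAt (fun s => (γ - 1) * s / γ) ((γ - 1) / γ) s₀ := by
    simpa using ((hasDerivAt_id s₀).const_mul (γ - 1)).div_const γ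
  have h2 : HasDerivAt (fun x : ℝ => x ^ (1 / (γ - 1)))
      ((1 / (γ - 1)) * u₀ ^ (1 / (γ - 1) - 1)) u₀ :=
    Real.hasDerivAt_rpow_const (Or.inl hu.ne')
  have h3 := h2.comp s₀ h1
  have hρ : hFun γ s₀ = u₀ ^ (1 / (γ - 1)) := rfl
  have hρpos : 0 < hFun γ s₀ := by rw [hρ]; positivity
  have hc2 : (soundSpeed γ (hFun γ s₀)) ^ 2 = γ * u₀ := by
    rw [soundSpeed, Real.sq_sqrt (by positivity), hρ, ← Real.rpow_mul hu.le,
      one_div, inv_mul_cancel₀ hγ1.ne', Real.rpow_one]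
  have heq : hFun γ s₀ / (soundSpeed γ (hFun γ s₀)) ^ 2
      = 1 / (γ - 1) * u₀ ^ (1 / (γ - 1) - 1) * ((γ - 1) / γ) := by
    rw [hc2, hρ, Real.rpow_sub hu, Real.rpow_one]
    field_simp
  rw [heq]
  exact h3

theorem shock_function_velocity_gradient (γ : ℝ) (hγ : 1 < γ)
    (vI : E2) (ρI a : ℝ) (ξ v₀ : E2) (hne : v₀ ≠ vI)
    (s₀ : ℝ) (hs₀ : s₀ = -(a + ⟪vI, ξ⟫_ℝ) + ⟪v₀, ξ⟫_ℝ - ‖v₀‖ ^ 2 / 2)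
    (hs₀pos : 0 < s₀)
    (ρ c : ℝ) (hρ : ρ = hFun γ s₀) (hc : c = soundSpeed γ ρ)
    (z nv tv : E2) (hz : z = v₀ - ξ)
    (hn : nv = ‖vI - v₀‖⁻¹ • (vI - v₀)) (ht : tv = rot90 nv) :
    HasGradientAt (fun v => gFun γ vI ρI a v ξ)
      (ρ • (nv - (⟪z, nv⟫_ℝ / c ^ 2) • z) -
        (⟪ρ • z - ρI • (vI - ξ), tv⟫_ℝ / ‖vI - v₀‖) • tv) v₀ := by
  have hu0 : vI - v₀ ≠ 0 := sub_ne_zero.mpr (Ne.symm hne)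
  have hγ0 : (0:ℝ) < γ := by linarith
  have hγ1 : (0:ℝ) < γ - 1 := by linarith
  have hρpos : 0 < ρ := by rw [hρ]; unfold hFun; positivity
  have hcpos : 0 < c := by rw [hc]; unfold soundSpeed; positivity
  have hr : 0 < ‖vI - v₀‖ := norm_pos_iff.mpr hu0
  set LS : E2 →L[ℝ] ℝ := (innerSL ℝ ξ) - (2:ℝ)⁻¹ • (2 • innerSL ℝ v₀) with hLS
  have hS : HasFDerivAt (fun v : E2 => -(a + ⟪vI, ξ⟫_ℝ) + ⟪v, ξ⟫_ℝ - ‖v‖ ^ 2 / 2) LS v₀ := by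
    have h1 : HasFDerivAt (fun v : E2 => ⟪v, ξ⟫_ℝ) (innerSL ℝ ξ) v₀ :=
      ((innerSL ℝ ξ).hasFDerivAt).congr_of_eventuallyEq
        (Filter.Eventually.of_forall fun v => (real_inner_comm v ξ).symm)
    have h2 : HasFDerivAt (fun v : E2 => ‖v‖ ^ 2 / 2)
        ((2:ℝ)⁻¹ • (2 • innerSL ℝ v₀)) v₀ := by
      have := ((hasStrictFDerivAt_norm_sq v₀).hasFDerivAt).const_smul (2:ℝ)⁻¹
      exact this.congr_of_eventuallyEq (Filter.Eventually.of_forall fun v => by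
        simp only [Pi.smul_apply, smul_eq_mul]; ring)
    exact (h1.const_add (-(a + ⟪vI, ξ⟫_ℝ))).sub h2
  -- h ∘ s
  have hcomp : HasFDerivAt (fun v : E2 => hFun γ (-(a + ⟪vI, ξ⟫_ℝ) + ⟪v, ξ⟫_ℝ - ‖v‖ ^ 2 / 2))
      ((ρ / c ^ 2) • LS) v₀ := by
    have hd : HasDerivAt (hFun γ) (ρ / c ^ 2) s₀ := by
      rw [hρ, hc, hρ]; exact hFun_hasDerivAt γ s₀ hγ hs₀pos
    exact (hd.comp_hasFDerivAt_of_eq v₀ hS hs₀)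
  -- F
  have hF : HasFDerivAt
      (fun v : E2 => hFun γ (-(a + ⟪vI, ξ⟫_ℝ) + ⟪v, ξ⟫_ℝ - ‖v‖ ^ 2 / 2) • (v - ξ) - ρI • (vI - ξ))
      (ρ • (ContinuousLinearMap.id ℝ E2) + ((ρ / c ^ 2) • LS).smulRight (v₀ - ξ)) v₀ := by
    have hid : HasFDerivAt (fun v : E2 => v - ξ) (ContinuousLinearMap.id ℝ E2) v₀ :=
      (hasFDerivAt_id v₀).sub_const ξ
    have := (hcomp.smul hid).sub_const (ρI • (vI - ξ))
    have h' : hFun γ (-(a + ⟪vI, ξ⟫_ℝ) + ⟪v₀, ξ⟫_ℝ - ‖v₀‖ ^ 2 / 2) = ρ := by rw [hρ, hs₀]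
    rw [h'] at this
    exact this
  -- N
  have hu : HasFDerivAt (fun v : E2 => vI - v)
      ((0:E2 →L[ℝ] E2) - ContinuousLinearMap.id ℝ E2) v₀ :=
    (hasFDerivAt_const vI v₀).sub (hasFDerivAt_id v₀)
  have hnorm : HasFDerivAt (fun v : E2 => ‖vI - v‖)
      ((1 / (2 * ‖vI - v₀‖)) • (2 • (innerSL ℝ (vI - v₀)).comp
        ((0:E2 →L[ℝ] E2) - ContinuousLinearMap.id ℝ E2))) v₀ := by
    have hsq : HasFDerivAt (fun v : E2 => ‖vI - v‖ ^ 2)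
        (2 • (innerSL ℝ (vI - v₀)).comp ((0:E2 →L[ℝ] E2) - ContinuousLinearMap.id ℝ E2)) v₀ :=
      hu.norm_sq
    have hs2 : HasDerivAt Real.sqrt (1 / (2 * Real.sqrt (‖vI - v₀‖ ^ 2))) (‖vI - v₀‖ ^ 2) :=
      Real.hasDerivAt_sqrt (by positivity)
    have h3 := hs2.comp_hasFDerivAt v₀ hsq
    rw [Real.sqrt_sq (norm_nonneg _)] at h3
    exact h3.congr_of_eventuallyEq (Filter.Eventually.of_forall fun v =>
      (Real.sqrt_sq (norm_nonneg _)).symm)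
  set Lr : E2 →L[ℝ] ℝ := (1 / (2 * ‖vI - v₀‖)) • (2 • (innerSL ℝ (vI - v₀)).comp
        ((0:E2 →L[ℝ] E2) - ContinuousLinearMap.id ℝ E2)) with hLr
  have hinv : HasFDerivAt (fun v : E2 => ‖vI - v‖⁻¹)
      ((-(‖vI - v₀‖ ^ 2)⁻¹) • Lr) v₀ :=
    (hasDerivAt_inv hr.ne').comp_hasFDerivAt v₀ hnorm
  have hN : HasFDerivAt (fun v : E2 => ‖vI - v‖⁻¹ • (vI - v))
      (‖vI - v₀‖⁻¹ • ((0:E2 →L[ℝ] E2) - ContinuousLinearMap.id ℝ E2)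
        + ((-(‖vI - v₀‖ ^ 2)⁻¹) • Lr).smulRight (vI - v₀)) v₀ :=
    hinv.smul hu
  have hg := hF.inner ℝ hN
  refine hasGradientAt_iff_hasFDerivAt.mpr ?_
  have hF0 : hFun γ (-(a + ⟪vI, ξ⟫_ℝ) + ⟪v₀, ξ⟫_ℝ - ‖v₀‖ ^ 2 / 2) = ρ := by rw [hρ, hs₀]
  rw [hF0] at hg
  have hEq : (toDual ℝ E2) (ρ • (nv - (⟪z, nv⟫_ℝ / c ^ 2) • z) -
        (⟪ρ • z - ρI • (vI - ξ), tv⟫_ℝ / ‖vI - v₀‖) • tv)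
      = (fderivInnerCLM ℝ (ρ • (v₀ - ξ) - ρI • (vI - ξ), ‖vI - v₀‖⁻¹ • (vI - v₀))).comp
          ((ρ • (ContinuousLinearMap.id ℝ E2) + ((ρ / c ^ 2) • LS).smulRight (v₀ - ξ)).prod
           (‖vI - v₀‖⁻¹ • ((0:E2 →L[ℝ] E2) - ContinuousLinearMap.id ℝ E2)
        + ((-(‖vI - v₀‖ ^ 2)⁻¹) • Lr).smulRight (vI - v₀))) := by
    ext w
    set r := ‖vI - v₀‖ with hrdef
    have hu_eq : vI - v₀ = r • nv := by
      rw [hn, smul_smul, mul_inv_cancel₀ hr.ne', one_smul]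
    have hnunit : ‖nv‖ = 1 := by
      rw [hn, norm_smul, norm_inv, norm_norm, inv_mul_cancel₀ hr.ne']
    subst hz ht
    rw [hLS, hLr, hu_eq]
    simp only [toDual_apply_apply, fderivInnerCLM_apply, ContinuousLinearMap.comp_apply,
      ContinuousLinearMap.prod_apply, ContinuousLinearMap.add_apply,
      ContinuousLinearMap.smul_apply, ContinuousLinearMap.smulRight_apply,
      ContinuousLinearMap.sub_apply, ContinuousLinearMap.coe_smul', Pi.smul_apply,
      ContinuousLinearMap.id_apply, ContinuousLinearMap.zero_apply, innerSL_apply_apply,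
      ContinuousLinearMap.neg_apply, smul_eq_mul,
      inner_smul_left, inner_smul_right, inner_sub_left, inner_sub_right,
      inner_add_left, inner_add_right, conj_trivial, inner_zero_left, inner_neg_left,
      zero_sub, inner_neg_right, nsmul_eq_mul]
    rw [← real_inner_comm w nv]
    rw [inner_expand nv hnunit v₀ w, inner_expand nv hnunit ξ w, inner_expand nv hnunit vI w]
    clear hg hF hN hS hcomp hu hnorm hinv
    field_simp [hr.ne', hcpos.ne']
    ring
  rw [hEq]
  exact hg

end
end

section
/- Normal and tangential components and signs of the velocity gradient of the shock function. In the setting of the previous gradient formula — γ > 1, h(s) := ((γ−1)s/γ)^{1/(γ−1)}, c(ρ) := √(γρ^{γ−1}), ψ^I(ξ) := a + v^I·ξ, g(v,ξ) := (h(−ψ^I(ξ)+v·ξ−½|v|²)(v−ξ) − ρ^I(v^I−ξ))·(v^I−v)/|v^I−v|, and at a point (v₀, ξ) with v₀ ≠ v^I and s₀ := −ψ^I(ξ)+v₀·ξ−½|v₀|² > 0, with ρ := h(s₀), c := c(ρ), z := v₀−ξ, n := (v^I−v₀)/|v^I−v₀|, t := n rotated 90° counterclockwise — the gradient g_v :=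 ∇_v g(v₀,ξ) satisfies: (a) g_v·n = ρ(1 − ((z·n)/c)²); (b) g_v·t = −(z·t)·(ρ(z·n)/c² + (ρ−ρ^I)/|v^I−v₀|); here (v^I−ξ)·t = z·t automatically. Consequently, if 0 < z·n < c and ρ > ρ^I > 0, then g_v·n > 0 (in particular g_v ≠ 0) and the sign of g_v·t is the opposite of the sign of z·t. -/
/-
STATEMENT 10: Normal and tangential components and signs of the velocity
gradient g_v := ∇_v g(v₀,ξ) of the shock function:
(a) g_v·n = ρ(1 − ((z·n)/c)²);
(b) g_v·t = −(z·t)(ρ(z·n)/c² + (ρ−ρ^I)/|v^I−v₀|); and (v^I−ξ)·t = z·t.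
Consequently, if 0 < z·n < c and ρ > ρ^I > 0, then g_v·n > 0 (so g_v ≠ 0)
and sign(g_v·t) = −sign(z·t).
-/

open InnerProductSpace

noncomputable section

lemma inner_rot90 (v : E2) : ⟪v, rot90 v⟫_ℝ = 0 := by
  simp [rot90, vec2, PiLp.inner_apply, Fin.sum_univ_two, WithLp.equiv_symm_apply]
  ring

set_option maxHeartbeats 1000000 in
theorem shock_function_gradient_components (γ : ℝ) (hγ : 1 < γ)
    (vI : E2) (ρI a : ℝ) (ξ v₀ : E2) (hne : v₀ ≠ vI)
    (s₀ : ℝ) (hs₀ : s₀ = -(a + ⟪vI, ξ⟫_ℝ) + ⟪v₀, ξ⟫_ℝ - ‖v₀‖ ^ 2 / 2)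
    (hs₀pos : 0 < s₀)
    (ρ c : ℝ) (hρ : ρ = hFun γ s₀) (hc : c = soundSpeed γ ρ)
    (z nv tv : E2) (hz : z = v₀ - ξ)
    (hn : nv = ‖vI - v₀‖⁻¹ • (vI - v₀)) (ht : tv = rot90 nv)
    (gv : E2) (hgv : gv = gradient (fun v => gFun γ vI ρI a v ξ) v₀) :
    ⟪gv, nv⟫_ℝ = ρ * (1 - (⟪z, nv⟫_ℝ / c) ^ 2) ∧
    ⟪gv, tv⟫_ℝ = -⟪z, tv⟫_ℝ * (ρ * ⟪z, nv⟫_ℝ / c ^ 2 + (ρ - ρI) / ‖vI - v₀‖) ∧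
    ⟪vI - ξ, tv⟫_ℝ = ⟪z, tv⟫_ℝ ∧
    (0 < ⟪z, nv⟫_ℝ → ⟪z, nv⟫_ℝ < c → ρI < ρ → 0 < ρI →
      0 < ⟪gv, nv⟫_ℝ ∧ gv ≠ 0 ∧ Real.sign ⟪gv, tv⟫_ℝ = -Real.sign ⟪z, tv⟫_ℝ) := by
  have hγ1 : (0:ℝ) < γ - 1 := by linarith
  have hγ0 : (0:ℝ) < γ := by linarith
  have hb : 0 < (γ - 1) * s₀ / γ := by positivity
  have hρpos : 0 < ρ := by rw [hρ, hFun]; positivity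
  have hρs : ρ ^ (γ - 1) = (γ - 1) * s₀ / γ := by
    rw [hρ, hFun, ← Real.rpow_mul hb.le, one_div, inv_mul_cancel₀ hγ1.ne', Real.rpow_one]
  have hc2 : c ^ 2 = (γ - 1) * s₀ := by
    rw [hc, soundSpeed, Real.sq_sqrt (by positivity), hρs]
    field_simp
  have hcpos : 0 < c := by
    rw [hc, soundSpeed]; positivity
  have hdh : HasDerivAt (hFun γ) (ρ / c ^ 2) s₀ := by
    have heq : hFun γ = fun s => ((γ - 1) * s / γ) ^ (1 / (γ - 1)) := rfl
    have h1 : HasDerivAt (fun s : ℝ => (γ - 1) * s / γ) ((γ - 1) / γ) s₀ := by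
      simpa using ((hasDerivAt_id s₀).const_mul (γ - 1)).div_const γ
    have h2 := (Real.hasDerivAt_rpow_const (x := (γ - 1) * s₀ / γ) (p := 1 / (γ - 1))
      (Or.inl hb.ne')).comp s₀ h1
    rw [heq]
    refine h2.congr_deriv (Eq.symm ?_)
    rw [Real.rpow_sub hb, Real.rpow_one, hρ, hFun, hc2]
    field_simp
  -- the gradient evaluation
  have hmne : vI - v₀ ≠ 0 := sub_ne_zero.mpr (Ne.symm hne)
  have hr : (0:ℝ) < ‖vI - v₀‖ := norm_pos_iff.mpr hmne
  have hds : HasFDerivAt (fun v : E2 => -(a + ⟪vI, ξ⟫_ℝ) + ⟪v, ξ⟫_ℝ - ‖v‖ ^ 2 / 2)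
      (innerSL ℝ (ξ - v₀)) v₀ := by
    have h1 : HasFDerivAt (fun v : E2 => ⟪v, ξ⟫_ℝ) (innerSL ℝ ξ) v₀ := by
      have : (fun v : E2 => ⟪v, ξ⟫_ℝ) = fun v => (innerSL ℝ ξ) v := by
        funext v; rw [innerSL_apply_apply]; exact real_inner_comm _ _
      rw [this]; exact (innerSL ℝ ξ).hasFDerivAt
    have h2 : HasFDerivAt (fun v : E2 => ‖v‖ ^ 2) (2 • innerSL ℝ v₀) v₀ := by
      simpa using (hasFDerivAt_id v₀).norm_sq
    have h3 := (h1.const_add (-(a + ⟪vI, ξ⟫_ℝ))).sub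
      (by simpa only [div_eq_mul_inv] using h2.mul_const (2:ℝ)⁻¹)
    convert h3 using 1
    all_goals
      ext w
      simp [inner_sub_left, ContinuousLinearMap.smul_apply, smul_eq_mul]
      try ring
  have hh : HasFDerivAt (fun v : E2 => hFun γ (-(a + ⟪vI, ξ⟫_ℝ) + ⟪v, ξ⟫_ℝ - ‖v‖ ^ 2 / 2))
      ((ρ / c ^ 2) • innerSL ℝ (ξ - v₀)) v₀ := by
    simpa [Function.comp_def] using hdh.comp_hasFDerivAt_of_eq v₀ hds hs₀
  have hFd := (hh.smul ((hasFDerivAt_id v₀).sub_const ξ)).sub_const (ρI • (vI - ξ))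
  have hmd : HasFDerivAt (fun v : E2 => vI - v) (-(ContinuousLinearMap.id ℝ E2)) v₀ :=
    (hasFDerivAt_id v₀).const_sub vI
  have hrpow := (Real.hasDerivAt_rpow_const (x := ‖vI - v₀‖ ^ 2) (p := -(1/2))
    (Or.inl (by positivity))).comp_hasFDerivAt v₀ hmd.norm_sq
  have hfuneq : ((fun x : ℝ => x ^ (-(1/2) : ℝ)) ∘ (fun v : E2 => ‖vI - v‖ ^ 2))
      = fun v : E2 => ‖vI - v‖⁻¹ := by
    funext v
    simp only [Function.comp_apply]
    rw [← Real.rpow_natCast ‖vI - v‖ 2, ← Real.rpow_mul (norm_nonneg _)]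
    norm_num [Real.rpow_neg_one]
  rw [hfuneq] at hrpow
  have hu := hrpow.smul hmd
  have hg' := HasFDerivAt.inner (𝕜 := ℝ) hFd hu
  simp only [id_eq, Pi.smul_apply', ← hs₀, ← hρ] at hg'
  have hg : HasFDerivAt (fun v => gFun γ vI ρI a v ξ) _ v₀ := hg'
  have hgveq : gv = (toDual ℝ E2).symm _ := hgv.trans hg.hasGradientAt.gradient
  have key0 : ∀ w : E2, ⟪gv, w⟫_ℝ = _ := fun w => by
    rw [hgveq, toDual_symm_apply]
  have hpow : ((‖vI - v₀‖ ^ 2 : ℝ) ^ (-(1/2) - 1 : ℝ)) = (‖vI - v₀‖ ^ 3)⁻¹ := by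
    rw [← Real.rpow_natCast ‖vI - v₀‖ 2, ← Real.rpow_mul (norm_nonneg _),
      ← Real.rpow_natCast ‖vI - v₀‖ 3, ← Real.rpow_neg (norm_nonneg _)]
    norm_num
  have key : ∀ w : E2, ⟪gv, w⟫_ℝ =
      ‖vI - v₀‖⁻¹ * (-⟪ρ • (v₀ - ξ) - ρI • (vI - ξ), w⟫_ℝ)
      + (‖vI - v₀‖ ^ 3)⁻¹ * ⟪vI - v₀, w⟫_ℝ * ⟪ρ • (v₀ - ξ) - ρI • (vI - ξ), vI - v₀⟫_ℝ
      + ‖vI - v₀‖⁻¹ * (ρ * ⟪w, vI - v₀⟫_ℝ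
          + ρ / c ^ 2 * ⟪ξ - v₀, w⟫_ℝ * ⟪v₀ - ξ, vI - v₀⟫_ℝ) := by
    intro w
    rw [key0 w]
    simp only [ContinuousLinearMap.coe_comp', Function.comp_apply,
      ContinuousLinearMap.prod_apply, fderivInnerCLM_apply, ContinuousLinearMap.add_apply,
      ContinuousLinearMap.coe_smul', Pi.smul_apply, ContinuousLinearMap.smulRight_apply,
      ContinuousLinearMap.neg_apply, ContinuousLinearMap.id_apply,
      innerSL_apply_apply, smul_eq_mul, inner_add_right, inner_smul_right, inner_neg_right,
      inner_add_left, inner_smul_left, inner_neg_left, conj_trivial, hpow]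
    ring
  clear key0 hgveq hg hg' hu hrpow hfuneq hmd hFd hh hds hdh
  -- geometric facts
  have hmrn : vI - v₀ = ‖vI - v₀‖ • nv := by
    rw [hn, smul_smul, mul_inv_cancel₀ hr.ne', one_smul]
  have hnv1 : ‖nv‖ = 1 := by
    rw [hn, norm_smul, norm_inv, norm_norm]; exact inv_mul_cancel₀ hr.ne'
  have hnn : ⟪nv, nv⟫_ℝ = 1 := by
    rw [real_inner_self_eq_norm_sq, hnv1]; norm_num
  have hnt : ⟪nv, tv⟫_ℝ = 0 := by rw [ht]; exact inner_rot90 nv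
  have F1 : ⟪vI - v₀, nv⟫_ℝ = ‖vI - v₀‖ := by
    conv_lhs => rw [hmrn]
    rw [real_inner_smul_left, hnn, mul_one]
  have F2 : ⟪nv, vI - v₀⟫_ℝ = ‖vI - v₀‖ := by rw [real_inner_comm]; exact F1
  have F3 : ⟪v₀ - ξ, nv⟫_ℝ = ⟪z, nv⟫_ℝ := by rw [hz]
  have F4 : ⟪ξ - v₀, nv⟫_ℝ = -⟪z, nv⟫_ℝ := by
    rw [hz, ← inner_neg_left, neg_sub]
  have hdecomp : vI - ξ = (v₀ - ξ) + (vI - v₀) := by abel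
  have F5 : ⟪vI - ξ, nv⟫_ℝ = ⟪z, nv⟫_ℝ + ‖vI - v₀‖ := by
    rw [hdecomp, inner_add_left, F3, F1]
  have F6 : ⟪v₀ - ξ, vI - v₀⟫_ℝ = ‖vI - v₀‖ * ⟪z, nv⟫_ℝ := by
    conv_lhs => rw [hmrn]
    rw [real_inner_smul_right, F3]
  have F7 : ⟪vI - ξ, vI - v₀⟫_ℝ = ‖vI - v₀‖ * (⟪z, nv⟫_ℝ + ‖vI - v₀‖) := by
    conv_lhs => rw [hmrn]
    rw [real_inner_smul_right, F5]
  have T1 : ⟪vI - v₀, tv⟫_ℝ = 0 := by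
    conv_lhs => rw [hmrn]
    rw [real_inner_smul_left, hnt, mul_zero]
  have T2 : ⟪tv, vI - v₀⟫_ℝ = 0 := by rw [real_inner_comm]; exact T1
  have T3 : ⟪v₀ - ξ, tv⟫_ℝ = ⟪z, tv⟫_ℝ := by rw [hz]
  have T4 : ⟪ξ - v₀, tv⟫_ℝ = -⟪z, tv⟫_ℝ := by
    rw [hz, ← inner_neg_left, neg_sub]
  have T5 : ⟪vI - ξ, tv⟫_ℝ = ⟪z, tv⟫_ℝ := by
    rw [hdecomp, inner_add_left, T3, T1, add_zero]
  -- part (a)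
  have partA : ⟪gv, nv⟫_ℝ = ρ * (1 - (⟪z, nv⟫_ℝ / c) ^ 2) := by
    rw [key nv]
    simp only [inner_sub_left, inner_smul_left, conj_trivial, F1, F2, F3, F4, F5, F6, F7]
    field_simp
    ring
  -- part (b)
  have partB : ⟪gv, tv⟫_ℝ
      = -⟪z, tv⟫_ℝ * (ρ * ⟪z, nv⟫_ℝ / c ^ 2 + (ρ - ρI) / ‖vI - v₀‖) := by
    rw [key tv]
    simp only [inner_sub_left, inner_smul_left, conj_trivial, T1, T2, T3, T4, T5, F6, F7]
    field_simp
    ring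
  refine ⟨partA, partB, T5, fun h1 h2 h3 h4 => ?_⟩
  have hq : (⟪z, nv⟫_ℝ / c) ^ 2 < 1 := by
    have h5 : ⟪z, nv⟫_ℝ / c < 1 := (div_lt_one hcpos).mpr h2
    have h6 : 0 ≤ ⟪z, nv⟫_ℝ / c := div_nonneg h1.le hcpos.le
    nlinarith
  have hgnpos : 0 < ⟪gv, nv⟫_ℝ := by
    rw [partA]; nlinarith
  have hgvne : gv ≠ 0 := by
    intro h0
    rw [h0, inner_zero_left] at hgnpos
    exact lt_irrefl 0 hgnpos
  have hK : 0 < ρ * ⟪z, nv⟫_ℝ / c ^ 2 + (ρ - ρI) / ‖vI - v₀‖ := by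
    have : 0 < ρ * ⟪z, nv⟫_ℝ / c ^ 2 := by positivity
    have h7 : 0 < (ρ - ρI) / ‖vI - v₀‖ := div_pos (by linarith) hr
    linarith
  refine ⟨hgnpos, hgvne, ?_⟩
  rcases lt_trichotomy (⟪z, tv⟫_ℝ) 0 with hzt | hzt | hzt
  · have : 0 < ⟪gv, tv⟫_ℝ := by rw [partB]; exact mul_pos (by linarith) hK
    rw [Real.sign_of_pos this, Real.sign_of_neg hzt]; norm_num
  · rw [partB, hzt]; simp
  · have : ⟪gv, tv⟫_ℝ < 0 := by
      rw [partB]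
      have : -⟪z, tv⟫_ℝ < 0 := by linarith
      exact mul_neg_of_neg_of_pos this hK
    rw [Real.sign_of_neg this, Real.sign_of_pos hzt]

end
end
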